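/- arXiv:2412.16684 — 2 statements merged into one kernel-verified Lean document; each statement's English description precedes it below -/
import Mathlib

section
/- Let W, W' be symmetric N×N real matrices with zero diagonal, N = m + n ≥ 4, and let π be a uniformly random permutation. With U_x = Σ_{π(i)≤m, π(j)≤m} W_{ij} and U'_x defined likewise from W', one has Cov(U_x, U'_x) = C(m−1)[(n−1)·W̃_2 + 2(m−2)·W̃_3], where C = 2mn/(N(N−1)(N−2)(N−3)), W̃_2 = Σ_{i,j} W_{ij}W'_{ij} − W_1 W'_1/(N(N−1)), W̃_3 = Σ_{i,j,r} W_{ij}W'_{ir} − W_1 W'_1/N, and W_1 = Σ_{i,j} W_{ij}, W'_1 = Σ_{i,j} W'_{ij}. -/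
open Finset

/-- Expectation under the uniform distribution on permutations of `Fin N`. -/
noncomputable def pE {N : ℕ} (f : Equiv.Perm (Fin N) → ℝ) : ℝ :=
  (∑ π : Equiv.Perm (Fin N), f π) / (Fintype.card (Equiv.Perm (Fin N)) : ℝ)

/-- Covariance under the uniform distribution on permutations of `Fin N`. -/
noncomputable def pCov {N : ℕ} (f g : Equiv.Perm (Fin N) → ℝ) : ℝ :=
  pE (fun π => (f π - pE f) * (g π - pE g))

/-- Within-first-group sum: sums `W i j` over pairs both assigned to the first `m` labels. -/
noncomputable def Ux {N : ℕ} (W : Matrix (Fin N) (Fin N) ℝ) (m : ℕ)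
    (π : Equiv.Perm (Fin N)) : ℝ :=
  ∑ i, ∑ j, if (π i : ℕ) < m ∧ (π j : ℕ) < m then W i j else 0

/-- Within-second-group sum: sums `W i j` over pairs both assigned to labels `> m`. -/
noncomputable def Uy {N : ℕ} (W : Matrix (Fin N) (Fin N) ℝ) (m : ℕ)
    (π : Equiv.Perm (Fin N)) : ℝ :=
  ∑ i, ∑ j, if m ≤ (π i : ℕ) ∧ m ≤ (π j : ℕ) then W i j else 0

open Equiv Nat

variable {α : Type*} [DecidableEq α] [Fintype α]

lemma card_perm_agree (u : Finset α) (f : α → α) (hf : Set.InjOn f u) :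
    (Finset.univ.filter fun π : Equiv.Perm α => ∀ x ∈ u, π x = f x).card
      = (Fintype.card α - u.card) ! := by
  classical
  induction u using Finset.induction with
  | empty => simp [Fintype.card_perm]
  | @insert a u ha IH =>
    have hfu : Set.InjOn f u := hf.mono (by simp [Finset.subset_insert])
    have hfa : ∀ x ∈ u, f x ≠ f a := by
      intro x hx hfxa
      exact ha (by rwa [hf (by simp [hx]) (by simp) hfxa] at hx)
    set S := Finset.univ.filter fun π : Equiv.Perm α => ∀ x ∈ u, π x = f x with hS
    set V := (Finset.univ : Finset α) \ u.image f with hV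
    have hmem : ∀ π ∈ S, π a ∈ V := by
      intro π hπ
      simp only [hS, Finset.mem_filter] at hπ
      simp only [hV, Finset.mem_sdiff, Finset.mem_univ, true_and, Finset.mem_image, not_exists]
      rintro x ⟨hx, hfx⟩
      rw [← hπ.2 x hx] at hfx
      exact ha (by rwa [π.injective hfx] at hx)
    have hfib : S.card = ∑ v ∈ V, (S.filter fun π => π a = v).card :=
      Finset.card_eq_sum_card_fiberwise hmem
    have hfaV : f a ∈ V := by
      simp only [hV, Finset.mem_sdiff, Finset.mem_univ, true_and, Finset.mem_image, not_exists]
      rintro x ⟨hx, hfx⟩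
      exact hfa x hx hfx
    have hsame : ∀ v ∈ V, (S.filter fun π => π a = v).card
        = (S.filter fun π => π a = f a).card := by
      intro v hv
      simp only [hV, Finset.mem_sdiff, Finset.mem_univ, true_and, Finset.mem_image,
        not_exists] at hv
      have hswap : ∀ x ∈ u, Equiv.swap v (f a) (f x) = f x := by
        intro x hx
        exact Equiv.swap_apply_of_ne_of_ne (fun h => hv x ⟨hx, h⟩) (hfa x hx)
      apply Finset.card_nbij (fun π => Equiv.swap v (f a) * π)
      · intro π hπ
        simp only [hS, Finset.coe_filter, Finset.mem_filter, Finset.mem_univ, true_and,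
          Set.mem_setOf_eq] at hπ ⊢
        refine ⟨fun x hx => ?_, ?_⟩
        · rw [Equiv.Perm.mul_apply, hπ.1 x hx, hswap x hx]
        · rw [Equiv.Perm.mul_apply, hπ.2, Equiv.swap_apply_left]
      · intro π _ τ _ h
        exact mul_left_cancel h
      · intro τ hτ
        simp only [hS, Finset.coe_filter, Finset.mem_filter, Finset.mem_univ, true_and,
          Set.mem_setOf_eq] at hτ
        refine ⟨Equiv.swap v (f a) * τ, ?_, ?_⟩
        · simp only [hS, Finset.coe_filter, Finset.mem_filter, Finset.mem_univ, true_and,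
            Set.mem_setOf_eq]
          refine ⟨fun x hx => ?_, ?_⟩
          · rw [Equiv.Perm.mul_apply, hτ.1 x hx, hswap x hx]
          · rw [Equiv.Perm.mul_apply, hτ.2, Equiv.swap_apply_right]
        · simp [← mul_assoc]
    have hVcard : V.card = Fintype.card α - u.card := by
      rw [hV, Finset.card_sdiff_of_subset (Finset.subset_univ _), Finset.card_univ,
        Finset.card_image_of_injOn hfu]
    have hsum : S.card = (Fintype.card α - u.card) * (S.filter fun π => π a = f a).card := by
      rw [hfib, Finset.sum_congr rfl hsame, Finset.sum_const, smul_eq_mul, hVcard]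
    have hgoal : (S.filter fun π => π a = f a)
        = Finset.univ.filter fun π : Equiv.Perm α => ∀ x ∈ insert a u, π x = f x := by
      ext π
      simp only [hS, Finset.mem_filter, Finset.mem_univ, true_and, Finset.mem_insert]
      constructor
      · rintro ⟨h1, h2⟩ x hx
        rcases hx with rfl | hx
        · exact h2
        · exact h1 x hx
      · intro h
        exact ⟨fun x hx => h x (Or.inr hx), h a (Or.inl rfl)⟩
    have hlt : u.card < Fintype.card α := by
      have := Finset.card_le_card (Finset.subset_univ (insert a u))
      rw [Finset.card_insert_of_notMem ha, Finset.card_univ] at this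
      omega
    have hpos : 0 < Fintype.card α - u.card := by omega
    have hfac : (Fintype.card α - u.card) !
        = (Fintype.card α - u.card) * (Fintype.card α - (insert a u).card) ! := by
      rw [Finset.card_insert_of_notMem ha]
      have : Fintype.card α - u.card = (Fintype.card α - (u.card + 1)) + 1 := by omega
      rw [this, Nat.factorial_succ]
    rw [← hgoal]
    have := hsum
    rw [IH hfu, hfac] at this
    exact (Nat.eq_of_mul_eq_mul_left hpos this.symm)

lemma card_perm_agree_maps (s u : Finset α) (f : α → α) (T : Finset α)
    (hdisj : Disjoint u s) (hf : Set.InjOn f u) (hfT : ∀ x ∈ u, f x ∉ T) :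
    (Finset.univ.filter fun π : Equiv.Perm α =>
        (∀ x ∈ u, π x = f x) ∧ (∀ x ∈ s, π x ∈ T)).card
      = T.card.descFactorial s.card * (Fintype.card α - u.card - s.card) ! := by
  classical
  induction s using Finset.induction generalizing u f T with
  | empty =>
    simp only [Finset.notMem_empty, false_implies, implies_true, and_true,
      Finset.card_empty, Nat.descFactorial_zero, one_mul, Nat.sub_zero]
    exact card_perm_agree u f hf
  | @insert a s ha IH =>
    have hau : a ∉ u := fun h => (Finset.disjoint_left.mp hdisj h (by simp))
    have has : Disjoint u s := hdisj.mono_right (by simp [Finset.subset_insert])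
    set F := Finset.univ.filter fun π : Equiv.Perm α =>
        (∀ x ∈ u, π x = f x) ∧ (∀ x ∈ insert a s, π x ∈ T) with hF
    have hmem : ∀ π ∈ F, π a ∈ T := by
      intro π hπ
      simp only [hF, Finset.mem_filter] at hπ
      exact hπ.2.2 a (by simp)
    have hfib : F.card = ∑ v ∈ T, (F.filter fun π => π a = v).card :=
      Finset.card_eq_sum_card_fiberwise hmem
    have hfiber : ∀ v ∈ T, (F.filter fun π => π a = v)
        = Finset.univ.filter fun π : Equiv.Perm α =>
            (∀ x ∈ insert a u, π x = Function.update f a v x)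
              ∧ (∀ x ∈ s, π x ∈ T.erase v) := by
      intro v hv
      ext π
      simp only [hF, Finset.mem_filter, Finset.mem_univ, true_and, Finset.mem_insert,
        Finset.mem_erase]
      constructor
      · rintro ⟨⟨h1, h2⟩, h3⟩
        refine ⟨fun x hx => ?_, fun x hx => ?_⟩
        · rcases hx with rfl | hx
          · simp [h3]
          · rw [Function.update_of_ne (fun h : x = a => hau (h ▸ hx)) _ _]
            exact h1 x hx
        · refine ⟨?_, h2 x (Or.inr hx)⟩
          rw [← h3]
          intro hcon
          have := π.injective hcon
          exact ha (this ▸ hx)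
      · rintro ⟨h1, h2⟩
        have hπa : π a = v := by simpa using h1 a (Or.inl rfl)
        refine ⟨⟨fun x hx => ?_, fun x hx => ?_⟩, hπa⟩
        · have := h1 x (Or.inr hx)
          rwa [Function.update_of_ne (fun h : x = a => hau (h ▸ hx)) _ _] at this
        · rcases hx with rfl | hx
          · rw [hπa]; exact hv
          · exact (h2 x hx).2
    have hcards : ∀ v ∈ T, (F.filter fun π => π a = v).card
        = (T.card - 1).descFactorial s.card
            * (Fintype.card α - (u.card + 1) - s.card) ! := by
      intro v hv
      rw [hfiber v hv]
      have hdisj' : Disjoint (insert a u) s := by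
        rw [Finset.disjoint_left]
        intro x hx hxs
        rcases Finset.mem_insert.mp hx with rfl | hx
        · exact ha hxs
        · exact Finset.disjoint_left.mp has hx hxs
      have hinj' : Set.InjOn (Function.update f a v) ((insert a u : Finset α) : Set α) := by
        intro x hx y hy hxy
        simp only [Finset.coe_insert, Set.mem_insert_iff, Finset.mem_coe] at hx hy
        rcases hx with rfl | hx <;> rcases hy with rfl | hy
        · rfl
        · rw [Function.update_self, Function.update_of_ne (fun h : y = x => hau (h ▸ hy))] at hxy
          exact absurd hxy.symm (fun h => hfT y hy (h ▸ hv))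
        · rw [Function.update_self, Function.update_of_ne (fun h : x = y => hau (h ▸ hx))] at hxy
          exact absurd hxy (fun h => hfT x hx (h ▸ hv))
        · rw [Function.update_of_ne (fun h : x = a => hau (h ▸ hx)),
            Function.update_of_ne (fun h : y = a => hau (h ▸ hy))] at hxy
          exact hf hx hy hxy
      have hfT' : ∀ x ∈ insert a u, Function.update f a v x ∉ T.erase v := by
        intro x hx
        rcases Finset.mem_insert.mp hx with rfl | hx
        · simp
        · rw [Function.update_of_ne (fun h : x = a => hau (h ▸ hx))]
          intro hcon
          exact hfT x hx (Finset.mem_of_mem_erase hcon)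
      have := IH (insert a u) (Function.update f a v) (T.erase v) hdisj' hinj' hfT'
      rw [this, Finset.card_erase_of_mem hv, Finset.card_insert_of_notMem hau]
    rw [hfib, Finset.sum_congr rfl hcards, Finset.sum_const, smul_eq_mul]
    rw [Finset.card_insert_of_notMem ha]
    have harith : Fintype.card α - (u.card + 1) - s.card
        = Fintype.card α - u.card - (s.card + 1) := by omega
    rw [harith]
    have hkey : T.card * ((T.card - 1).descFactorial s.card)
        = T.card.descFactorial (s.card + 1) := by
      rcases Nat.eq_zero_or_pos T.card with h0 | hpos
      · rw [h0]; simp [Nat.zero_descFactorial_succ]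
      · obtain ⟨c, hc⟩ := Nat.exists_eq_add_of_lt hpos
        rw [Nat.zero_add] at hc
        rw [hc, Nat.succ_descFactorial_succ, Nat.add_sub_cancel]
    rw [← mul_assoc, hkey]

noncomputable def indR (m : ℕ) {N : ℕ} (π : Equiv.Perm (Fin N)) (i : Fin N) : ℝ :=
  if (π i : ℕ) < m then 1 else 0

noncomputable def qq (m N t : ℕ) : ℝ :=
  ((m.descFactorial t * (N - t) ! : ℕ) : ℝ) / ((N ! : ℕ) : ℝ)

lemma card_lt_filter (m N : ℕ) (hmN : m ≤ N) :
    ((Finset.univ : Finset (Fin N)).filter fun v : Fin N => (v : ℕ) < m).card = m := by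
  apply Finset.card_eq_of_bijective (fun k hk => (⟨k, lt_of_lt_of_le hk hmN⟩ : Fin N))
  · intro a ha
    simp only [Finset.mem_filter, Finset.mem_univ, true_and] at ha
    exact ⟨(a : ℕ), ha, by simp⟩
  · intro k hk
    simp [hk]
  · intro k l hk hl h
    simpa using congrArg Fin.val h

lemma sum_prod_indR (m : ℕ) {N : ℕ} (hmN : m ≤ N) (s : Finset (Fin N)) :
    ∑ π : Equiv.Perm (Fin N), ∏ x ∈ s, indR m π x
      = ((m.descFactorial s.card * (N - s.card) ! : ℕ) : ℝ) := by
  classical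
  have h1 : ∀ π : Equiv.Perm (Fin N), ∏ x ∈ s, indR m π x
      = if (∀ x ∈ s, ((π x : ℕ) < m)) then (1:ℝ) else 0 := by
    intro π
    simp only [indR]
    by_cases h : ∀ x ∈ s, (π x : ℕ) < m
    · rw [if_pos h]
      exact Finset.prod_eq_one fun x hx => if_pos (h x hx)
    · rw [if_neg h]
      push_neg at h
      obtain ⟨x, hx, hxm⟩ := h
      exact Finset.prod_eq_zero hx (if_neg (by omega))
  simp only [h1]
  rw [Finset.sum_boole]
  have h2 : (Finset.univ.filter fun π : Equiv.Perm (Fin N) => ∀ x ∈ s, (π x : ℕ) < m)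
      = Finset.univ.filter fun π : Equiv.Perm (Fin N) =>
          (∀ x ∈ (∅ : Finset (Fin N)), π x = id x)
            ∧ (∀ x ∈ s, π x ∈ Finset.univ.filter fun v : Fin N => (v : ℕ) < m) := by
    apply Finset.filter_congr
    intro π _
    simp
  rw [h2]
  have h3 := card_perm_agree_maps s ∅ id
      (Finset.univ.filter fun v : Fin N => (v : ℕ) < m)
      (Finset.disjoint_empty_left s) (by simp) (by simp)
  rw [card_lt_filter m N hmN] at h3
  norm_cast
  convert h3 using 2 <;> simp

lemma pE_prod_indR (m : ℕ) {N : ℕ} (hmN : m ≤ N) (s : Finset (Fin N)) :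
    pE (fun π => ∏ x ∈ s, indR m π x) = qq m N s.card := by
  rw [pE, sum_prod_indR m hmN s, qq, Fintype.card_perm, Fintype.card_fin]

section pEalg
variable {N : ℕ}

lemma card_perm_ne : ((Fintype.card (Equiv.Perm (Fin N)) : ℕ) : ℝ) ≠ 0 :=
  Nat.cast_ne_zero.mpr Fintype.card_ne_zero

lemma pE_add (f g : Equiv.Perm (Fin N) → ℝ) :
    pE (fun π => f π + g π) = pE f + pE g := by
  unfold pE; rw [Finset.sum_add_distrib]; ring

lemma pE_sub (f g : Equiv.Perm (Fin N) → ℝ) :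
    pE (fun π => f π - g π) = pE f - pE g := by
  unfold pE; rw [Finset.sum_sub_distrib]; ring

lemma pE_const_mul (c : ℝ) (f : Equiv.Perm (Fin N) → ℝ) :
    pE (fun π => c * f π) = c * pE f := by
  unfold pE; rw [← Finset.mul_sum, mul_div_assoc]

lemma pE_const (c : ℝ) : pE (fun _ : Equiv.Perm (Fin N) => c) = c := by
  unfold pE
  rw [Finset.sum_const, Finset.card_univ, nsmul_eq_mul, mul_comm, mul_div_assoc,
    div_self card_perm_ne, mul_one]

lemma pE_sum {β : Type*} (s : Finset β) (F : β → Equiv.Perm (Fin N) → ℝ) :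
    pE (fun π => ∑ x ∈ s, F x π) = ∑ x ∈ s, pE (F x) := by
  unfold pE; rw [Finset.sum_comm, Finset.sum_div]

lemma pCov_eq (f g : Equiv.Perm (Fin N) → ℝ) :
    pCov f g = pE (fun π => f π * g π) - pE f * pE g := by
  unfold pCov
  have h : ∀ π : Equiv.Perm (Fin N), (f π - pE f) * (g π - pE g)
      = f π * g π - (pE f * g π + pE g * f π - pE f * pE g) := by intro π; ring
  calc pE (fun π => (f π - pE f) * (g π - pE g))
      = pE (fun π => f π * g π - (pE f * g π + pE g * f π - pE f * pE g)) := by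
        congr 1; funext π; exact h π
    _ = pE (fun π => f π * g π)
        - (pE f * pE g + pE g * pE f - pE f * pE g) := by
        rw [pE_sub, pE_sub, pE_add, pE_const_mul, pE_const_mul, pE_const]
    _ = pE (fun π => f π * g π) - pE f * pE g := by ring

end pEalg

section moments
variable {N : ℕ} (m : ℕ)

lemma E2 (hmN : m ≤ N) {i j : Fin N} (hij : i ≠ j) :
    pE (fun π => indR m π i * indR m π j) = qq m N 2 := by
  have h : (fun π : Equiv.Perm (Fin N) => indR m π i * indR m π j)
      = fun π => ∏ x ∈ ({i, j} : Finset (Fin N)), indR m π x := by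
    funext π; rw [Finset.prod_pair hij]
  rw [h, pE_prod_indR m hmN, Finset.card_pair hij]

lemma ind_sq (π : Equiv.Perm (Fin N)) (i : Fin N) :
    indR m π i * indR m π i = indR m π i := by
  unfold indR; split_ifs <;> ring

lemma E4 (hmN : m ≤ N) {i j k l : Fin N} (hij : i ≠ j) (hkl : k ≠ l) :
    pE (fun π => (indR m π i * indR m π j) * (indR m π k * indR m π l)) =
      qq m N 4
      + (qq m N 3 - qq m N 4) *
          ((if k = i then (1:ℝ) else 0) + (if k = j then (1:ℝ) else 0)
            + (if l = i then (1:ℝ) else 0) + (if l = j then (1:ℝ) else 0))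
      + (qq m N 2 + qq m N 4 - 2 * qq m N 3) *
          ((if k = i then (1:ℝ) else 0) * (if l = j then (1:ℝ) else 0)
            + (if k = j then (1:ℝ) else 0) * (if l = i then (1:ℝ) else 0)) := by
  classical
  have prod3 : ∀ a b c : Fin N, a ≠ b → a ≠ c → b ≠ c →
      ∀ π : Equiv.Perm (Fin N),
        (∏ x ∈ ({a, b, c} : Finset (Fin N)), indR m π x)
          = indR m π a * indR m π b * indR m π c := by
    intro a b c hab hac hbc π
    rw [Finset.prod_insert (by simp [hab, hac]), Finset.prod_insert (by simp [hbc]),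
      Finset.prod_singleton, mul_assoc]
  have card3 : ∀ a b c : Fin N, a ≠ b → a ≠ c → b ≠ c →
      ({a, b, c} : Finset (Fin N)).card = 3 := by
    intro a b c hab hac hbc
    rw [Finset.card_insert_of_notMem (by simp [hab, hac]),
      Finset.card_insert_of_notMem (by simp [hbc]), Finset.card_singleton]
  by_cases hki : k = i
  · have hkj : k ≠ j := by rw [hki]; exact hij
    by_cases hlj : l = j
    · have hli : l ≠ i := by rw [hlj]; exact hij.symm
      have h : (fun π : Equiv.Perm (Fin N) =>
            (indR m π i * indR m π j) * (indR m π k * indR m π l))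
          = fun π => ∏ x ∈ ({i, j} : Finset (Fin N)), indR m π x := by
        funext π; rw [Finset.prod_pair hij, hki, hlj]; unfold indR; split_ifs <;> ring
      rw [h, pE_prod_indR m hmN, Finset.card_pair hij,
        if_pos hki, if_pos hlj, if_neg hkj, if_neg hli]
      ring
    · have hli : l ≠ i := by rw [← hki]; exact hkl.symm
      have h : (fun π : Equiv.Perm (Fin N) =>
            (indR m π i * indR m π j) * (indR m π k * indR m π l))
          = fun π => ∏ x ∈ ({i, j, l} : Finset (Fin N)), indR m π x := by
        funext π
        rw [prod3 i j l hij (Ne.symm hli) (Ne.symm hlj), hki]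
        unfold indR; split_ifs <;> ring
      rw [h, pE_prod_indR m hmN, card3 i j l hij (Ne.symm hli) (Ne.symm hlj),
        if_pos hki, if_neg hkj, if_neg hli, if_neg hlj]
      ring
  · by_cases hkj : k = j
    · have hlj : l ≠ j := by rw [← hkj]; exact hkl.symm
      by_cases hli : l = i
      · have h : (fun π : Equiv.Perm (Fin N) =>
              (indR m π i * indR m π j) * (indR m π k * indR m π l))
            = fun π => ∏ x ∈ ({i, j} : Finset (Fin N)), indR m π x := by
          funext π; rw [Finset.prod_pair hij, hkj, hli]; unfold indR; split_ifs <;> ring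
        rw [h, pE_prod_indR m hmN, Finset.card_pair hij,
          if_neg hki, if_pos hkj, if_pos hli, if_neg hlj]
        ring
      · have h : (fun π : Equiv.Perm (Fin N) =>
              (indR m π i * indR m π j) * (indR m π k * indR m π l))
            = fun π => ∏ x ∈ ({i, j, l} : Finset (Fin N)), indR m π x := by
          funext π
          rw [prod3 i j l hij (Ne.symm hli) (Ne.symm hlj), hkj]
          unfold indR; split_ifs <;> ring
        rw [h, pE_prod_indR m hmN, card3 i j l hij (Ne.symm hli) (Ne.symm hlj),
          if_neg hki, if_pos hkj, if_neg hli, if_neg hlj]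
        ring
    · by_cases hli : l = i
      · have hlj : l ≠ j := by rw [hli]; exact hij
        have h : (fun π : Equiv.Perm (Fin N) =>
              (indR m π i * indR m π j) * (indR m π k * indR m π l))
            = fun π => ∏ x ∈ ({i, j, k} : Finset (Fin N)), indR m π x := by
          funext π
          rw [prod3 i j k (hij) (Ne.symm hki) (Ne.symm hkj), hli]
          unfold indR; split_ifs <;> ring
        rw [h, pE_prod_indR m hmN, card3 i j k hij (Ne.symm hki) (Ne.symm hkj),
          if_neg hki, if_neg hkj, if_pos hli, if_neg hlj]
        ring
      · by_cases hlj : l = j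
        · have h : (fun π : Equiv.Perm (Fin N) =>
                (indR m π i * indR m π j) * (indR m π k * indR m π l))
              = fun π => ∏ x ∈ ({i, j, k} : Finset (Fin N)), indR m π x := by
            funext π
            rw [prod3 i j k hij (Ne.symm hki) (Ne.symm hkj), hlj]
            unfold indR; split_ifs <;> ring
          rw [h, pE_prod_indR m hmN, card3 i j k hij (Ne.symm hki) (Ne.symm hkj),
            if_neg hki, if_neg hkj, if_neg hli, if_pos hlj]
          ring
        · have h : (fun π : Equiv.Perm (Fin N) =>
                (indR m π i * indR m π j) * (indR m π k * indR m π l))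
              = fun π => ∏ x ∈ ({i, j, k, l} : Finset (Fin N)), indR m π x := by
            funext π
            rw [Finset.prod_insert (by simp [hij, Ne.symm hki, Ne.symm hli]),
              Finset.prod_insert (by simp [Ne.symm hkj, Ne.symm hlj]),
              Finset.prod_pair hkl]
            ring
          have hc : ({i, j, k, l} : Finset (Fin N)).card = 4 := by
            rw [Finset.card_insert_of_notMem (by simp [hij, Ne.symm hki, Ne.symm hli]),
              Finset.card_insert_of_notMem (by simp [Ne.symm hkj, Ne.symm hlj]),
              Finset.card_pair hkl]
          rw [h, pE_prod_indR m hmN, hc,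
            if_neg hki, if_neg hkj, if_neg hli, if_neg hlj]
          ring

end moments

section main

variable {N : ℕ}

lemma sum_if_const {β : Type*} (s : Finset β) (c : Prop) [Decidable c] (f : β → ℝ) :
    ∑ x ∈ s, (if c then f x else 0) = if c then ∑ x ∈ s, f x else 0 := by
  split_ifs <;> simp

lemma collapse {β : Type*} [Fintype β] [DecidableEq β] (a : β) (f : β → ℝ) :
    ∑ x, (if x = a then f x else 0) = f a := by
  rw [Finset.sum_ite_eq']; simp

lemma Ux_apply (W : Matrix (Fin N) (Fin N) ℝ) (m : ℕ) (π : Equiv.Perm (Fin N)) :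
    Ux W m π = ∑ i, ∑ j, W i j * (indR m π i * indR m π j) := by
  unfold Ux
  refine Finset.sum_congr rfl fun i _ => Finset.sum_congr rfl fun j _ => ?_
  unfold indR
  by_cases h1 : (π i : ℕ) < m <;> by_cases h2 : (π j : ℕ) < m <;> simp [h1, h2]

lemma pE_Ux (m : ℕ) (hmN : m ≤ N) (W : Matrix (Fin N) (Fin N) ℝ)
    (hdiag : ∀ i, W i i = 0) :
    pE (Ux W m) = (∑ i, ∑ j, W i j) * qq m N 2 := by
  have h1 : pE (Ux W m) = ∑ i, ∑ j, W i j * pE (fun π => indR m π i * indR m π j) := by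
    calc pE (Ux W m) = pE (fun π => ∑ i, ∑ j, W i j * (indR m π i * indR m π j)) := by
          congr 1; funext π; exact Ux_apply W m π
      _ = ∑ i, pE (fun π => ∑ j, W i j * (indR m π i * indR m π j)) := pE_sum _ _
      _ = ∑ i, ∑ j, pE (fun π => W i j * (indR m π i * indR m π j)) :=
          Finset.sum_congr rfl fun i _ => pE_sum _ _
      _ = ∑ i, ∑ j, W i j * pE (fun π => indR m π i * indR m π j) :=
          Finset.sum_congr rfl fun i _ => Finset.sum_congr rfl fun j _ => pE_const_mul _ _
  rw [h1, Finset.sum_mul]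
  refine Finset.sum_congr rfl fun i _ => ?_
  rw [Finset.sum_mul]
  refine Finset.sum_congr rfl fun j _ => ?_
  by_cases hij : i = j
  · rw [hij, hdiag j, zero_mul, zero_mul]
  · rw [E2 m hmN hij]

lemma pE_UxUx (m : ℕ) (hmN : m ≤ N) (W W' : Matrix (Fin N) (Fin N) ℝ)
    (hsym : W.IsSymm) (hdiag : ∀ i, W i i = 0)
    (hsym' : W'.IsSymm) (hdiag' : ∀ i, W' i i = 0) :
    pE (fun π => Ux W m π * Ux W' m π)
      = qq m N 4 * ((∑ i, ∑ j, W i j) * (∑ i, ∑ j, W' i j))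
        + (qq m N 3 - qq m N 4) * (4 * ∑ x, (∑ j, W x j) * (∑ j, W' x j))
        + (qq m N 2 + qq m N 4 - 2 * qq m N 3) * (2 * ∑ i, ∑ j, W i j * W' i j) := by
  classical
  have step1 : ∀ π : Equiv.Perm (Fin N), Ux W m π * Ux W' m π
      = ∑ i, ∑ k, ∑ j, ∑ l, (W i j * W' k l) *
          ((indR m π i * indR m π j) * (indR m π k * indR m π l)) := by
    intro π
    rw [Ux_apply W m π, Ux_apply W' m π, Finset.sum_mul_sum]
    refine Finset.sum_congr rfl fun i _ => Finset.sum_congr rfl fun k _ => ?_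
    rw [Finset.sum_mul_sum]
    refine Finset.sum_congr rfl fun j _ => Finset.sum_congr rfl fun l _ => ?_
    ring
  have step2 : pE (fun π => Ux W m π * Ux W' m π)
      = ∑ i, ∑ k, ∑ j, ∑ l, (W i j * W' k l) *
          pE (fun π => (indR m π i * indR m π j) * (indR m π k * indR m π l)) := by
    calc pE (fun π => Ux W m π * Ux W' m π)
        = pE (fun π => ∑ i, ∑ k, ∑ j, ∑ l, (W i j * W' k l) *
            ((indR m π i * indR m π j) * (indR m π k * indR m π l))) := by
          congr 1; funext π; exact step1 π
      _ = ∑ i, pE fun π => ∑ k, ∑ j, ∑ l, (W i j * W' k l) *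
            ((indR m π i * indR m π j) * (indR m π k * indR m π l)) := pE_sum _ _
      _ = ∑ i, ∑ k, pE fun π => ∑ j, ∑ l, (W i j * W' k l) *
            ((indR m π i * indR m π j) * (indR m π k * indR m π l)) :=
          Finset.sum_congr rfl fun _ _ => pE_sum _ _
      _ = ∑ i, ∑ k, ∑ j, pE fun π => ∑ l, (W i j * W' k l) *
            ((indR m π i * indR m π j) * (indR m π k * indR m π l)) :=
          Finset.sum_congr rfl fun _ _ => Finset.sum_congr rfl fun _ _ => pE_sum _ _
      _ = ∑ i, ∑ k, ∑ j, ∑ l, pE fun π => (W i j * W' k l) *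
            ((indR m π i * indR m π j) * (indR m π k * indR m π l)) :=
          Finset.sum_congr rfl fun _ _ => Finset.sum_congr rfl fun _ _ =>
            Finset.sum_congr rfl fun _ _ => pE_sum _ _
      _ = ∑ i, ∑ k, ∑ j, ∑ l, (W i j * W' k l) *
            pE (fun π => (indR m π i * indR m π j) * (indR m π k * indR m π l)) :=
          Finset.sum_congr rfl fun _ _ => Finset.sum_congr rfl fun _ _ =>
            Finset.sum_congr rfl fun _ _ => Finset.sum_congr rfl fun _ _ =>
              pE_const_mul _ _
  have step3 : ∀ i k j l : Fin N, (W i j * W' k l) *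
        pE (fun π => (indR m π i * indR m π j) * (indR m π k * indR m π l))
      = qq m N 4 * (W i j * W' k l)
        + ((qq m N 3 - qq m N 4) * ((W i j * W' k l) * (if k = i then (1:ℝ) else 0))
          + (qq m N 3 - qq m N 4) * ((W i j * W' k l) * (if k = j then (1:ℝ) else 0))
          + (qq m N 3 - qq m N 4) * ((W i j * W' k l) * (if l = i then (1:ℝ) else 0))
          + (qq m N 3 - qq m N 4) * ((W i j * W' k l) * (if l = j then (1:ℝ) else 0)))
        + ((qq m N 2 + qq m N 4 - 2 * qq m N 3) *
              ((W i j * W' k l) * ((if k = i then (1:ℝ) else 0) * (if l = j then (1:ℝ) else 0)))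
          + (qq m N 2 + qq m N 4 - 2 * qq m N 3) *
              ((W i j * W' k l) * ((if k = j then (1:ℝ) else 0) * (if l = i then (1:ℝ) else 0)))) := by
    intro i k j l
    by_cases hij : i = j
    · have h0 : W i j = 0 := by rw [hij]; exact hdiag j
      simp [h0]
    · by_cases hkl : k = l
      · have h0 : W' k l = 0 := by rw [hkl]; exact hdiag' l
        simp [h0]
      · rw [E4 m hmN hij hkl]; ring
  rw [step2]
  calc (∑ i, ∑ k, ∑ j, ∑ l, (W i j * W' k l) *
          pE (fun π => (indR m π i * indR m π j) * (indR m π k * indR m π l)))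
      = ∑ i, ∑ k, ∑ j, ∑ l, (qq m N 4 * (W i j * W' k l)
        + ((qq m N 3 - qq m N 4) * ((W i j * W' k l) * (if k = i then (1:ℝ) else 0))
          + (qq m N 3 - qq m N 4) * ((W i j * W' k l) * (if k = j then (1:ℝ) else 0))
          + (qq m N 3 - qq m N 4) * ((W i j * W' k l) * (if l = i then (1:ℝ) else 0))
          + (qq m N 3 - qq m N 4) * ((W i j * W' k l) * (if l = j then (1:ℝ) else 0)))
        + ((qq m N 2 + qq m N 4 - 2 * qq m N 3) *
              ((W i j * W' k l) * ((if k = i then (1:ℝ) else 0) * (if l = j then (1:ℝ) else 0)))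
          + (qq m N 2 + qq m N 4 - 2 * qq m N 3) *
              ((W i j * W' k l) * ((if k = j then (1:ℝ) else 0) * (if l = i then (1:ℝ) else 0))))) :=
        Finset.sum_congr rfl fun i _ => Finset.sum_congr rfl fun k _ =>
          Finset.sum_congr rfl fun j _ => Finset.sum_congr rfl fun l _ => step3 i k j l
    _ = qq m N 4 * ((∑ i, ∑ j, W i j) * (∑ i, ∑ j, W' i j))
        + (qq m N 3 - qq m N 4) * (4 * ∑ x, (∑ j, W x j) * (∑ j, W' x j))
        + (qq m N 2 + qq m N 4 - 2 * qq m N 3) * (2 * ∑ i, ∑ j, W i j * W' i j) := by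
      calc (∑ i, ∑ k, ∑ j, ∑ l, (qq m N 4 * (W i j * W' k l)
        + ((qq m N 3 - qq m N 4) * ((W i j * W' k l) * (if k = i then (1:ℝ) else 0))
          + (qq m N 3 - qq m N 4) * ((W i j * W' k l) * (if k = j then (1:ℝ) else 0))
          + (qq m N 3 - qq m N 4) * ((W i j * W' k l) * (if l = i then (1:ℝ) else 0))
          + (qq m N 3 - qq m N 4) * ((W i j * W' k l) * (if l = j then (1:ℝ) else 0)))
        + ((qq m N 2 + qq m N 4 - 2 * qq m N 3) *
              ((W i j * W' k l) * ((if k = i then (1:ℝ) else 0) * (if l = j then (1:ℝ) else 0)))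
          + (qq m N 2 + qq m N 4 - 2 * qq m N 3) *
              ((W i j * W' k l) * ((if k = j then (1:ℝ) else 0) * (if l = i then (1:ℝ) else 0))))))
          = ∑ i, ∑ k,
              (qq m N 4 * ((∑ j, W i j) * (∑ l, W' k l))
                + ((qq m N 3 - qq m N 4) *
                      (((∑ j, W i j) * (∑ l, W' k l)) * (if k = i then (1:ℝ) else 0))
                  + (qq m N 3 - qq m N 4) * (W i k * (∑ l, W' k l))
                  + (qq m N 3 - qq m N 4) * ((∑ j, W i j) * W' k i)
                  + (qq m N 3 - qq m N 4) * (∑ j, W i j * W' k j))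
                + ((qq m N 2 + qq m N 4 - 2 * qq m N 3) *
                      ((∑ j, W i j * W' k j) * (if k = i then (1:ℝ) else 0))
                  + (qq m N 2 + qq m N 4 - 2 * qq m N 3) * (W i k * W' k i))) := by
            refine Finset.sum_congr rfl fun i _ => Finset.sum_congr rfl fun k _ => ?_
            simp only [mul_ite, mul_one, mul_zero, ite_mul, zero_mul, one_mul]
            simp only [Finset.sum_add_distrib, sum_if_const, Finset.sum_ite_eq',
              Finset.sum_ite_eq, Finset.mem_univ, if_true,
              ← Finset.mul_sum, ← Finset.sum_mul]
        _ = qq m N 4 * ((∑ i, ∑ j, W i j) * (∑ i, ∑ j, W' i j))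
            + (qq m N 3 - qq m N 4) * (4 * ∑ x, (∑ j, W x j) * (∑ j, W' x j))
            + (qq m N 2 + qq m N 4 - 2 * qq m N 3) * (2 * ∑ i, ∑ j, W i j * W' i j) := by
          have hsymm : ∀ a b, W a b = W b a := fun a b => hsym.apply b a
          have hsymm' : ∀ a b, W' a b = W' b a := fun a b => hsym'.apply b a
          have hb2 : (∑ i, ∑ k, W i k * (∑ l, W' k l))
              = ∑ x, (∑ j, W x j) * (∑ j, W' x j) := by
            rw [Finset.sum_comm]
            refine Finset.sum_congr rfl fun k _ => ?_
            rw [← Finset.sum_mul]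
            congr 1
            exact Finset.sum_congr rfl fun i _ => hsymm i k
          have hb3 : (∑ i, (∑ j, W i j) * ∑ k, W' k i)
              = ∑ x, (∑ j, W x j) * (∑ j, W' x j) := by
            refine Finset.sum_congr rfl fun i _ => ?_
            congr 1
            exact Finset.sum_congr rfl fun k _ => hsymm' k i
          have hb4 : (∑ i, ∑ k, ∑ j, W i j * W' k j)
              = ∑ x, (∑ j, W x j) * (∑ j, W' x j) := by
            have e4 : ∀ i : Fin N, (∑ k, ∑ j, W i j * W' k j)
                = ∑ j, W i j * (∑ l, W' j l) := by
              intro i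
              rw [Finset.sum_comm]
              refine Finset.sum_congr rfl fun j _ => ?_
              rw [← Finset.mul_sum]
              congr 1
              exact Finset.sum_congr rfl fun k _ => hsymm' k j
            calc (∑ i, ∑ k, ∑ j, W i j * W' k j) = ∑ i, ∑ j, W i j * (∑ l, W' j l) :=
                  Finset.sum_congr rfl fun i _ => e4 i
              _ = ∑ j, ∑ i, W i j * (∑ l, W' j l) := Finset.sum_comm
              _ = ∑ j, (∑ i, W i j) * (∑ l, W' j l) := by
                  refine Finset.sum_congr rfl fun j _ => ?_; rw [← Finset.sum_mul]
              _ = ∑ x, (∑ j, W x j) * (∑ j, W' x j) := by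
                  refine Finset.sum_congr rfl fun j _ => ?_
                  congr 1
                  exact Finset.sum_congr rfl fun i _ => hsymm i j
          have hc2 : (∑ i, ∑ k, W i k * W' k i) = ∑ i, ∑ j, W i j * W' i j := by
            refine Finset.sum_congr rfl fun i _ => Finset.sum_congr rfl fun k _ => ?_
            rw [hsymm' k i]
          simp only [Finset.sum_add_distrib, mul_ite, mul_one, mul_zero, sum_if_const,
            Finset.sum_ite_eq', Finset.sum_ite_eq, Finset.mem_univ, if_true,
            ← Finset.mul_sum, ← Finset.sum_mul]
          rw [hb2, hb3, hb4, hc2]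
          ring


end main

section final

lemma qq_cast (m N t : ℕ) (htN : t ≤ N) :
    qq m N t = ((m.descFactorial t : ℕ) : ℝ) / ((N.descFactorial t : ℕ) : ℝ) := by
  unfold qq
  have h : (N - t) ! * N.descFactorial t = N ! := Nat.factorial_mul_descFactorial htN
  have h2 : ((N.descFactorial t : ℕ) : ℝ) ≠ 0 := by
    have : N.descFactorial t ≠ 0 := fun h =>
      absurd (Nat.descFactorial_eq_zero_iff_lt.mp h) (not_lt.mpr htN)
    exact_mod_cast this
  have h3 : ((N ! : ℕ) : ℝ) ≠ 0 := Nat.cast_ne_zero.mpr (Nat.factorial_ne_zero N)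
  rw [div_eq_div_iff h3 h2]
  have hnat : m.descFactorial t * (N - t) ! * N.descFactorial t
      = m.descFactorial t * N ! := by rw [mul_assoc, h]
  exact_mod_cast hnat

lemma desc2_cast (m : ℕ) (hm : 1 ≤ m) :
    ((m.descFactorial 2 : ℕ) : ℝ) = m * ((m : ℝ) - 1) := by
  have h1 : ((m - 1 : ℕ) : ℝ) = (m : ℝ) - 1 := by
    push_cast [Nat.cast_sub hm]; ring
  simp [Nat.descFactorial_succ, Nat.descFactorial_zero, h1]
  ring

lemma desc3_cast (m : ℕ) (hm : 2 ≤ m) :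
    ((m.descFactorial 3 : ℕ) : ℝ) = m * ((m : ℝ) - 1) * ((m : ℝ) - 2) := by
  have h1 : ((m - 1 : ℕ) : ℝ) = (m : ℝ) - 1 := by
    push_cast [Nat.cast_sub (by omega : 1 ≤ m)]; ring
  have h2 : ((m - 2 : ℕ) : ℝ) = (m : ℝ) - 2 := by
    push_cast [Nat.cast_sub hm]; ring
  simp [Nat.descFactorial_succ, Nat.descFactorial_zero, h1, h2]
  ring

lemma desc4_cast (m : ℕ) (hm : 2 ≤ m) :
    ((m.descFactorial 4 : ℕ) : ℝ)
      = m * ((m : ℝ) - 1) * ((m : ℝ) - 2) * ((m : ℝ) - 3) := by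
  rcases lt_or_ge m 4 with h4 | h4
  · interval_cases m <;> norm_num [Nat.descFactorial_succ, Nat.descFactorial_zero]
  · have h1 : ((m - 1 : ℕ) : ℝ) = (m : ℝ) - 1 := by
      push_cast [Nat.cast_sub (by omega : 1 ≤ m)]; ring
    have h2 : ((m - 2 : ℕ) : ℝ) = (m : ℝ) - 2 := by
      push_cast [Nat.cast_sub (by omega : 2 ≤ m)]; ring
    have h3 : ((m - 3 : ℕ) : ℝ) = (m : ℝ) - 3 := by
      push_cast [Nat.cast_sub (by omega : 3 ≤ m)]; ring
    simp [Nat.descFactorial_succ, Nat.descFactorial_zero, h1, h2, h3]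
    ring

theorem stmt_2 (m n N : ℕ) (hm : 2 ≤ m) (hn : 2 ≤ n) (hN : N = m + n)
    (W W' : Matrix (Fin N) (Fin N) ℝ)
    (hsym : W.IsSymm) (hdiag : ∀ i, W i i = 0)
    (hsym' : W'.IsSymm) (hdiag' : ∀ i, W' i i = 0) :
    pCov (Ux W m) (Ux W' m) =
      (2 * (m : ℝ) * (n : ℝ) / ((N : ℝ) * ((N : ℝ) - 1) * ((N : ℝ) - 2) * ((N : ℝ) - 3)))
        * ((m : ℝ) - 1) *
        (((n : ℝ) - 1) *
            ((∑ i, ∑ j, W i j * W' i j)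
              - (∑ i, ∑ j, W i j) * (∑ i, ∑ j, W' i j) / ((N : ℝ) * ((N : ℝ) - 1)))
          + 2 * ((m : ℝ) - 2) *
            ((∑ i, ∑ j, ∑ r, W i j * W' i r)
              - (∑ i, ∑ j, W i j) * (∑ i, ∑ j, W' i j) / (N : ℝ))) := by
  have hmN : m ≤ N := by omega
  have hN4 : 4 ≤ N := by omega
  have hT : (∑ i, ∑ j, ∑ r, W i j * W' i r)
      = ∑ x, (∑ j, W x j) * (∑ j, W' x j) := by
    refine Finset.sum_congr rfl fun i _ => ?_
    exact (Finset.sum_mul_sum _ _ _ _).symm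
  rw [pCov_eq, pE_UxUx m hmN W W' hsym hdiag hsym' hdiag',
    pE_Ux m hmN W hdiag, pE_Ux m hmN W' hdiag', hT]
  rw [qq_cast m N 2 (by omega), qq_cast m N 3 (by omega), qq_cast m N 4 (by omega),
    desc2_cast m (by omega), desc3_cast m hm, desc4_cast m hm,
    desc2_cast N (by omega), desc3_cast N (by omega), desc4_cast N (by omega)]
  have hNR : (n : ℝ) = (N : ℝ) - (m : ℝ) := by
    rw [hN]; push_cast; ring
  rw [hNR]
  have hge : (4 : ℝ) ≤ (N : ℝ) := by exact_mod_cast hN4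
  have h0 : (N : ℝ) ≠ 0 := by linarith
  have h1 : (N : ℝ) - 1 ≠ 0 := by intro h; nlinarith [h]
  have h2 : (N : ℝ) - 2 ≠ 0 := by intro h; nlinarith [h]
  have h3 : (N : ℝ) - 3 ≠ 0 := by intro h; nlinarith [h]
  field_simp
  ring

end final
end

section
/- Let X, Y ∈ ℝ^d be independent random vectors with independent coordinates such that E‖X − EX‖₂²/d → σ₁², E‖Y − EY‖₂²/d → σ₂², and ‖EX − EY‖₂²/d → υ² as d → ∞, with uniformly bounded fourth coordinate moments. If X, X' are i.i.d. and Y, Y' are i.i.d., then ‖X − X'‖₂/√d → √2·σ₁, ‖Y − Y'‖₂/√d → √2·σ₂, and ‖X − Y‖₂/√d → √(σ₁² + σ₂² + υ²), all in probability as d → ∞. -/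
open Filter MeasureTheory ProbabilityTheory
open scoped ENNReal NNReal

private lemma sqrt_sub_sqrt_le (a b : ℝ) :
    Real.sqrt a - Real.sqrt b ≤ Real.sqrt |a - b| := by
  rcases le_total a b with h | h
  · exact le_trans (sub_nonpos.2 (Real.sqrt_le_sqrt h)) (Real.sqrt_nonneg _)
  · rcases le_total b 0 with hb | hb
    · have hb0 : Real.sqrt b = 0 := Real.sqrt_eq_zero'.2 (by simpa using hb)
      rw [hb0, sub_zero, abs_of_nonneg (sub_nonneg.2 h)]
      exact Real.sqrt_le_sqrt (by linarith)
    · have h1 := Real.sq_sqrt hb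
      have h2 := Real.sq_sqrt (sub_nonneg.2 h)
      have h3 := Real.sqrt_nonneg b
      have h4 := Real.sqrt_nonneg (a - b)
      have key : Real.sqrt a ≤ Real.sqrt b + Real.sqrt (a - b) := by
        have h5 : a ≤ (Real.sqrt b + Real.sqrt (a - b)) ^ 2 := by nlinarith
        calc Real.sqrt a ≤ Real.sqrt ((Real.sqrt b + Real.sqrt (a - b)) ^ 2) :=
              Real.sqrt_le_sqrt h5
          _ = _ := Real.sqrt_sq (by positivity)
      rw [abs_of_nonneg (sub_nonneg.2 h)]
      linarith

private lemma abs_sqrt_sub_sqrt (a b : ℝ) :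
    |Real.sqrt a - Real.sqrt b| ≤ Real.sqrt |a - b| := by
  rcases abs_sub_le_iff.2 ⟨sqrt_sub_sqrt_le a b, by rw [abs_sub_comm]; exact sqrt_sub_sqrt_le b a⟩ with h
  exact h

private lemma MeasureTheory.MemLp.variance_eq' {Ω : Type*} [MeasurableSpace Ω] {μ : Measure Ω}
    {X : Ω → ℝ} (hX : MemLp X 2 μ) :
    variance X μ = μ[((X - fun _ => μ[X]) ^ (2 : ℕ) : Ω → ℝ)] := by
  rw [variance_eq_integral hX.aestronglyMeasurable.aemeasurable]
  rfl

private lemma tendstoInMeasure_sqrt {Ω : Type*} [MeasurableSpace Ω] {μ : Measure Ω}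
    {g : ℕ → Ω → ℝ} {c : ℝ}
    (h : TendstoInMeasure μ g atTop (fun _ => c)) :
    TendstoInMeasure μ (fun d ω => Real.sqrt (g d ω)) atTop (fun _ => Real.sqrt c) := by
  rw [tendstoInMeasure_iff_dist] at h ⊢
  intro ε hε
  have h2 := h (ε ^ 2) (by positivity)
  refine tendsto_of_tendsto_of_tendsto_of_le_of_le tendsto_const_nhds h2
    (fun d => zero_le') (fun d => measure_mono fun x hx => ?_)
  simp only [Set.mem_setOf_eq, Real.dist_eq] at hx ⊢
  by_contra hcon
  push_neg at hcon
  have h3 := abs_sqrt_sub_sqrt (g d x) c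
  have h4 : Real.sqrt |g d x - c| < Real.sqrt (ε ^ 2) :=
    Real.sqrt_lt_sqrt (abs_nonneg _) hcon
  rw [Real.sqrt_sq hε.le] at h4
  linarith

private lemma tendstoInMeasure_div_of_mean_var {Ω : Type*} [MeasurableSpace Ω] (μ : Measure Ω)
    [IsProbabilityMeasure μ] (f : ℕ → Ω → ℝ) (L : ℝ)
    (hf : ∀ d, MemLp (f d) 2 μ)
    (hmean : Tendsto (fun d : ℕ => (∫ ω, f d ω ∂μ) / d) atTop (nhds L))
    (hvar : Tendsto (fun d : ℕ => variance (f d) μ / (d : ℝ) ^ 2) atTop (nhds 0)) :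
    TendstoInMeasure μ (fun d ω => f d ω / d) atTop (fun _ => L) := by
  rw [tendstoInMeasure_iff_dist]
  intro ε hε
  have hmean' : ∀ᶠ d : ℕ in atTop, |(∫ ω, f d ω ∂μ) / d - L| < ε / 2 := by
    have := Metric.tendsto_nhds.mp hmean (ε / 2) (by positivity)
    simpa [Real.dist_eq] using this
  have key : ∀ᶠ d : ℕ in atTop,
      μ {x | ε ≤ dist (f d x / d) L}
        ≤ ENNReal.ofReal ((variance (f d) μ / (d : ℝ) ^ 2) * (4 / ε ^ 2)) := by
    filter_upwards [hmean', eventually_ge_atTop 1] with d hd hd1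
    have hdpos : (0 : ℝ) < d := by exact_mod_cast hd1
    have hsub : {x | ε ≤ dist (f d x / d) L}
        ⊆ {x | (d : ℝ) * ε / 2 ≤ |f d x - ∫ ω, f d ω ∂μ|} := by
      intro x hx
      simp only [Set.mem_setOf_eq, Real.dist_eq] at hx ⊢
      have t1 : |f d x / d - L| ≤ |f d x / d - (∫ ω, f d ω ∂μ) / d|
          + |(∫ ω, f d ω ∂μ) / d - L| := abs_sub_le _ _ _
      have t3 : |f d x / d - (∫ ω, f d ω ∂μ) / d| = |f d x - ∫ ω, f d ω ∂μ| / d := by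
        rw [div_sub_div_same, abs_div, abs_of_pos hdpos]
      have t2 : ε / 2 ≤ |f d x - ∫ ω, f d ω ∂μ| / d := by rw [← t3]; linarith
      calc (d : ℝ) * ε / 2 = (ε / 2) * d := by ring
        _ ≤ |f d x - ∫ ω, f d ω ∂μ| := (le_div_iff₀ hdpos).1 t2
    refine (measure_mono hsub).trans ?_
    have hch := meas_ge_le_variance_div_sq (hf d) (c := (d : ℝ) * ε / 2) (by positivity)
    refine hch.trans (le_of_eq ?_)
    congr 1
    field_simp
    ring
  have hlim : Tendsto
      (fun d : ℕ => ENNReal.ofReal ((variance (f d) μ / (d : ℝ) ^ 2) * (4 / ε ^ 2)))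
      atTop (nhds 0) := by
    have h0 : Tendsto (fun d : ℕ => (variance (f d) μ / (d : ℝ) ^ 2) * (4 / ε ^ 2)) atTop
        (nhds (0 * (4 / ε ^ 2))) := hvar.mul_const _
    rw [zero_mul] at h0
    simpa using ENNReal.tendsto_ofReal h0
  exact tendsto_of_tendsto_of_tendsto_of_le_of_le' tendsto_const_nhds hlim
    (Eventually.of_forall fun d => zero_le') key

private lemma memℒp_sq {Ω : Type*} [MeasurableSpace Ω] {μ : Measure Ω} {h : Ω → ℝ}
    (hh : MemLp h 4 μ) : MemLp (fun ω => h ω ^ 2) 2 μ := by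
  have h4 : (1 : ℝ≥0∞) / 2 = 1 / 4 + 1 / 4 := by
    rw [ENNReal.div_add_div_same]
    refine (ENNReal.div_eq_div_iff (by norm_num) (by norm_num) (by norm_num) (by norm_num)).2 ?_
    norm_num
  have hsm : MemLp (h • h) 2 μ := by
    haveI : ENNReal.HolderTriple 4 4 2 := ⟨by simpa [one_div] using h4.symm⟩
    exact hh.smul hh
  have heq : (h • h) = fun ω => h ω ^ 2 := funext fun ω => by
    simp [Pi.smul_apply', smul_eq_mul, sq]
  rwa [heq] at hsm

private lemma memℒp_sq' {Ω : Type*} [MeasurableSpace Ω] {μ : Measure Ω} {h : Ω → ℝ}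
    (hh : MemLp h 4 μ) : MemLp (fun ω => h ω ^ 2) 2 μ := by
  have h4 : (1 : ℝ≥0∞) / 2 = 1 / 4 + 1 / 4 := by
    rw [ENNReal.div_add_div_same]
    refine (ENNReal.div_eq_div_iff (by norm_num) (by norm_num) (by norm_num) (by norm_num)).2 ?_
    norm_num
  have hsm : MemLp (h • h) 2 μ := by
    haveI : ENNReal.HolderTriple 4 4 2 := ⟨by simpa [one_div] using h4.symm⟩
    exact hh.smul hh
  have heq : (h • h) = fun ω => h ω ^ 2 := funext fun ω => by
    simp [Pi.smul_apply', smul_eq_mul, sq]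
  rwa [heq] at hsm

private lemma integrable_pow4 {Ω : Type*} [MeasurableSpace Ω] {μ : Measure Ω}
    [IsFiniteMeasure μ] {h : Ω → ℝ}
    (hh : MemLp h 4 μ) : Integrable (fun ω => h ω ^ 4) μ := by
  have := (memℒp_sq' hh).integrable_sq
  have heq : (fun ω => (h ω ^ 2) ^ 2) = fun ω => h ω ^ 4 := funext fun ω => by ring
  rwa [heq] at this

private lemma coord_facts {Ω : Type*} [MeasurableSpace Ω] (μ : Measure Ω)
    [IsProbabilityMeasure μ]
    (f g : Ω → ℝ) (hf : MemLp f 4 μ) (hg : MemLp g 4 μ) (hfg : IndepFun f g μ)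
    (C : ℝ) (hCf : (∫ ω, |f ω - ∫ ω', f ω' ∂μ| ^ 4 ∂μ) ≤ C)
    (hCg : (∫ ω, |g ω - ∫ ω', g ω' ∂μ| ^ 4 ∂μ) ≤ C) :
    MemLp (fun ω => (f ω - g ω) ^ 2) 2 μ
    ∧ (∫ ω, (f ω - g ω) ^ 2 ∂μ)
        = variance f μ + variance g μ + ((∫ ω, f ω ∂μ) - ∫ ω, g ω ∂μ) ^ 2
    ∧ variance (fun ω => (f ω - g ω) ^ 2) μ
        ≤ 32 * C + (8 * (1 + 16 * C)) * ((∫ ω, f ω ∂μ) - ∫ ω, g ω ∂μ) ^ 2 := by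
  set mf := ∫ ω, f ω ∂μ with hmf
  set mg := ∫ ω, g ω ∂μ with hmg
  set m := mf - mg with hm
  set Z : Ω → ℝ := fun ω => f ω - g ω with hZdef
  have hZ4 : MemLp Z 4 μ := hf.sub hg
  have hZ2 : MemLp Z 2 μ := hZ4.mono_exponent (by norm_num)
  have hf2 : MemLp f 2 μ := hf.mono_exponent (by norm_num)
  have hg2 : MemLp g 2 μ := hg.mono_exponent (by norm_num)
  have hZsq2 : MemLp (fun ω => Z ω ^ 2) 2 μ := memℒp_sq' hZ4
  have hmZ : ∫ ω, Z ω ∂μ = m := by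
    simp only [hZdef]
    rw [integral_sub (hf.integrable (by norm_num)) (hg.integrable (by norm_num))]
  set W : Ω → ℝ := fun ω => Z ω - m with hWdef
  have hW4 : MemLp W 4 μ := hZ4.sub (memLp_const m)
  have hW2 : MemLp W 2 μ := hW4.mono_exponent (by norm_num)
  have hWsq2 : MemLp (fun ω => W ω ^ 2) 2 μ := memℒp_sq' hW4
  have hW4int : Integrable (fun ω => W ω ^ 4) μ := integrable_pow4 hW4
  have hW2int : Integrable (fun ω => W ω ^ 2) μ := hW2.integrable_sq
  have hWint : Integrable W μ := hW2.integrable one_le_two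
  have hfc4 : Integrable (fun ω => (f ω - mf) ^ 4) μ := integrable_pow4 (hf.sub (memLp_const mf))
  have hgc4 : Integrable (fun ω => (g ω - mg) ^ 4) μ := integrable_pow4 (hg.sub (memLp_const mg))
  have hC4f : (∫ ω, (f ω - mf) ^ 4 ∂μ) ≤ C := by
    have heq : (fun ω => (f ω - mf) ^ 4) = fun ω => |f ω - mf| ^ 4 := funext fun ω => by
      rw [pow_abs, abs_of_nonneg (by positivity)]
    rw [heq]; exact hCf
  have hC4g : (∫ ω, (g ω - mg) ^ 4 ∂μ) ≤ C := by
    have heq : (fun ω => (g ω - mg) ^ 4) = fun ω => |g ω - mg| ^ 4 := funext fun ω => by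
      rw [pow_abs, abs_of_nonneg (by positivity)]
    rw [heq]; exact hCg
  have hEW4 : (∫ ω, W ω ^ 4 ∂μ) ≤ 16 * C := by
    have hpt : ∀ ω, W ω ^ 4 ≤ 8 * (f ω - mf) ^ 4 + 8 * (g ω - mg) ^ 4 := by
      intro ω
      have hWω : W ω = (f ω - mf) - (g ω - mg) := by simp only [hWdef, hZdef, hm]; ring
      rw [hWω]
      nlinarith [sq_nonneg ((f ω - mf) + (g ω - mg)), sq_nonneg ((f ω - mf) - (g ω - mg)),
        sq_nonneg ((f ω - mf) ^ 2 - (g ω - mg) ^ 2), sq_nonneg ((f ω - mf) * (g ω - mg)),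
        sq_nonneg ((f ω - mf) ^ 2 + (g ω - mg) ^ 2)]
    calc (∫ ω, W ω ^ 4 ∂μ)
        ≤ ∫ ω, 8 * (f ω - mf) ^ 4 + 8 * (g ω - mg) ^ 4 ∂μ :=
          integral_mono hW4int ((hfc4.const_mul 8).add (hgc4.const_mul 8)) hpt
      _ = 8 * (∫ ω, (f ω - mf) ^ 4 ∂μ) + 8 * (∫ ω, (g ω - mg) ^ 4 ∂μ) := by
          rw [integral_add (hfc4.const_mul 8) (hgc4.const_mul 8), integral_const_mul,
            integral_const_mul]
      _ ≤ 16 * C := by linarith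
  have hC0 : (0 : ℝ) ≤ C := le_trans (integral_nonneg fun ω => by positivity) hCf
  have hEW4nn : (0 : ℝ) ≤ ∫ ω, W ω ^ 4 ∂μ := integral_nonneg fun ω => by positivity
  have hEW2 : (∫ ω, W ω ^ 2 ∂μ) ≤ 1 + 16 * C := by
    calc (∫ ω, W ω ^ 2 ∂μ) ≤ ∫ ω, 1 + W ω ^ 4 ∂μ := by
          refine integral_mono hW2int ((integrable_const 1).add hW4int) fun ω => ?_
          nlinarith [sq_nonneg (W ω ^ 2 - 1)]
      _ = 1 + ∫ ω, W ω ^ 4 ∂μ := by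
          rw [integral_add (integrable_const 1) hW4int]; simp
      _ ≤ 1 + 16 * C := by linarith
  have hEW2nn : (0 : ℝ) ≤ ∫ ω, W ω ^ 2 ∂μ := integral_nonneg fun ω => by positivity
  have hEW : ∫ ω, W ω ∂μ = 0 := by
    simp only [hWdef]
    rw [integral_sub (hZ2.integrable one_le_two) (integrable_const m), hmZ, integral_const]
    simp
  have hEZ2 : (∫ ω, Z ω ^ 2 ∂μ) = (∫ ω, W ω ^ 2 ∂μ) + m ^ 2 := by
    have hpt : (fun ω => Z ω ^ 2) = fun ω => (W ω ^ 2 + (2 * m) * W ω) + m ^ 2 := by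
      funext ω
      have : Z ω = W ω + m := by simp [hWdef]
      rw [this]; ring
    have hi1 : Integrable (fun ω => W ω ^ 2 + 2 * m * W ω) μ :=
      hW2int.add (hWint.const_mul (2 * m))
    have hi2 : Integrable (fun ω => 2 * m * W ω) μ := hWint.const_mul (2 * m)
    rw [hpt, integral_add hi1 (integrable_const _),
      integral_add hW2int hi2, integral_const_mul, hEW, integral_const]
    simp
  have hVarZW : variance Z μ = ∫ ω, W ω ^ 2 ∂μ := by
    rw [hZ2.variance_eq']
    have heq : ((Z - fun _ => ∫ ω, Z ω ∂μ) ^ (2 : ℕ) : Ω → ℝ) = fun ω => W ω ^ 2 := by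
      funext ω
      simp [hWdef, hmZ]
    rw [heq]
  have hVarZ : variance Z μ = variance f μ + variance g μ := by
    have h1 : Z = f + (-g) := funext fun ω => by simp [hZdef, sub_eq_add_neg]
    have h2 : (-g : Ω → ℝ) = fun ω => (-1 : ℝ) * g ω := funext fun ω => by simp
    rw [h1, IndepFun.variance_add hf2 (hg2.neg) (hfg.neg_right), h2, variance_const_mul]
    norm_num
  refine ⟨hZsq2, ?_, ?_⟩
  · rw [hEZ2, ← hVarZW, hVarZ]
  · -- variance bound
    set EW2 := ∫ ω, W ω ^ 2 ∂μ with hEW2def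
    have hVeq : variance (fun ω => Z ω ^ 2) μ
        = ∫ ω, ((W ω ^ 2 - EW2) + (2 * m) * W ω) ^ 2 ∂μ := by
      rw [hZsq2.variance_eq']
      have heq : (((fun ω => Z ω ^ 2) - fun _ => ∫ ω, Z ω ^ 2 ∂μ) ^ (2 : ℕ) : Ω → ℝ)
          = fun ω => ((W ω ^ 2 - EW2) + (2 * m) * W ω) ^ 2 := by
        funext ω
        have h1 : Z ω = W ω + m := by simp [hWdef]
        simp only [Pi.pow_apply, Pi.sub_apply, hEZ2, h1]
        ring
      rw [heq]
    have hG2 : MemLp (fun ω => W ω ^ 2 - EW2) 2 μ := hWsq2.sub (memLp_const EW2)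
    have hGint : Integrable (fun ω => (W ω ^ 2 - EW2) ^ 2) μ := hG2.integrable_sq
    have hLHSint : Integrable (fun ω => ((W ω ^ 2 - EW2) + (2 * m) * W ω) ^ 2) μ := by
      have : MemLp (fun ω => (W ω ^ 2 - EW2) + (2 * m) * W ω) 2 μ :=
        hG2.add (hW2.const_mul (2 * m))
      exact this.integrable_sq
    have hbound : (∫ ω, ((W ω ^ 2 - EW2) + (2 * m) * W ω) ^ 2 ∂μ)
        ≤ ∫ ω, 2 * (W ω ^ 2 - EW2) ^ 2 + (8 * m ^ 2) * W ω ^ 2 ∂μ := by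
      refine integral_mono hLHSint ((hGint.const_mul 2).add (hW2int.const_mul (8 * m ^ 2)))
        fun ω => ?_
      nlinarith [sq_nonneg ((W ω ^ 2 - EW2) - (2 * m) * W ω)]
    have hVarWsq : (∫ ω, (W ω ^ 2 - EW2) ^ 2 ∂μ) ≤ 16 * C := by
      have h1 : (∫ ω, (W ω ^ 2 - EW2) ^ 2 ∂μ) = variance (fun ω => W ω ^ 2) μ := by
        rw [hWsq2.variance_eq']
        congr 1
      have h2 := variance_le_expectation_sq (μ := μ) (X := fun ω => W ω ^ 2)
        hWsq2.aestronglyMeasurable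
      rw [h1]
      refine h2.trans ?_
      have h4 : (∫ ω, ((fun ω => W ω ^ 2) ^ (2:ℕ)) ω ∂μ) = ∫ ω, W ω ^ 4 ∂μ := by
        congr 1
        funext ω
        show (W ω ^ 2) ^ 2 = W ω ^ 4
        ring
      rw [h4]
      exact hEW4
    have hfinal : (∫ ω, 2 * (W ω ^ 2 - EW2) ^ 2 + (8 * m ^ 2) * W ω ^ 2 ∂μ)
        ≤ 32 * C + (8 * (1 + 16 * C)) * m ^ 2 := by
      have hi3 : Integrable (fun ω => 2 * (W ω ^ 2 - EW2) ^ 2) μ := hGint.const_mul 2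
      have hi4 : Integrable (fun ω => (8 * m ^ 2) * W ω ^ 2) μ := hW2int.const_mul (8 * m ^ 2)
      rw [integral_add hi3 hi4, integral_const_mul, integral_const_mul, ← hEW2def]
      have h5 := mul_le_mul_of_nonneg_left hEW2 (show (0:ℝ) ≤ 8 * m ^ 2 by positivity)
      have h6 : (8 * m ^ 2) * (1 + 16 * C) = 8 * (1 + 16 * C) * m ^ 2 := by ring
      linarith [hVarWsq]
    rw [hVeq]
    exact hbound.trans hfinal

private lemma master {Ω : Type*} [MeasurableSpace Ω] (μ : Measure Ω) [IsProbabilityMeasure μ]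
    (A B : (d : ℕ) → Fin d → Ω → ℝ)
    (hA4 : ∀ d (j : Fin d), MemLp (A d j) 4 μ)
    (hB4 : ∀ d (j : Fin d), MemLp (B d j) 4 μ)
    (hind1 : ∀ d (j : Fin d), IndepFun (A d j) (B d j) μ)
    (hind2 : ∀ d (j k : Fin d), j ≠ k →
      IndepFun (fun ω => (A d j ω - B d j ω) ^ 2) (fun ω => (A d k ω - B d k ω) ^ 2) μ)
    (C : ℝ)
    (hCA : ∀ d (j : Fin d), (∫ ω, |A d j ω - ∫ ω', A d j ω' ∂μ| ^ 4 ∂μ) ≤ C)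
    (hCB : ∀ d (j : Fin d), (∫ ω, |B d j ω - ∫ ω', B d j ω' ∂μ| ^ 4 ∂μ) ≤ C)
    (a b v : ℝ)
    (hva : Tendsto (fun d : ℕ => (∑ j, variance (A d j) μ) / d) atTop (nhds a))
    (hvb : Tendsto (fun d : ℕ => (∑ j, variance (B d j) μ) / d) atTop (nhds b))
    (hm : Tendsto (fun d : ℕ =>
      (∑ j, ((∫ ω, A d j ω ∂μ) - ∫ ω, B d j ω ∂μ) ^ 2) / d) atTop (nhds v)) :
    TendstoInMeasure μ
      (fun d ω => Real.sqrt (∑ j, (A d j ω - B d j ω) ^ 2) / Real.sqrt d) atTop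
      (fun _ => Real.sqrt (a + b + v)) := by
  have hfacts := fun d (j : Fin d) => coord_facts μ (A d j) (B d j) (hA4 d j) (hB4 d j)
    (hind1 d j) C (hCA d j) (hCB d j)
  set S : ℕ → Ω → ℝ := fun d ω => ∑ j, (A d j ω - B d j ω) ^ 2 with hSdef
  set T : ℕ → ℝ := fun d => ∑ j : Fin d, ((∫ ω, A d j ω ∂μ) - ∫ ω, B d j ω ∂μ) ^ 2 with hTdef
  have hS2 : ∀ d, MemLp (S d) 2 μ := by
    intro d
    have h := memLp_finsetSum' (μ := μ) (p := 2) Finset.univ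
      (f := fun (j : Fin d) => fun ω => (A d j ω - B d j ω) ^ 2)
      (fun j _ => (hfacts d j).1)
    have heq : (∑ j : Fin d, fun ω => (A d j ω - B d j ω) ^ 2) = S d := by
      funext ω
      simp [hSdef, Finset.sum_apply]
    rwa [heq] at h
  have hSint : ∀ d (j : Fin d), Integrable (fun ω => (A d j ω - B d j ω) ^ 2) μ :=
    fun d j => (hfacts d j).1.integrable one_le_two
  have hmeanS : ∀ d, (∫ ω, S d ω ∂μ)
      = (∑ j, variance (A d j) μ) + (∑ j, variance (B d j) μ) + T d := by
    intro d
    have h := integral_finset_sum (μ := μ) Finset.univ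
      (f := fun (j : Fin d) => fun ω => (A d j ω - B d j ω) ^ 2) (fun j _ => hSint d j)
    simp only [hSdef]
    rw [h]
    rw [Finset.sum_congr rfl fun j _ => (hfacts d j).2.1]
    rw [Finset.sum_add_distrib, Finset.sum_add_distrib]
  have hVarS : ∀ d, variance (S d) μ
      = ∑ j : Fin d, variance (fun ω => (A d j ω - B d j ω) ^ 2) μ := by
    intro d
    have h := IndepFun.variance_sum (μ := μ)
      (X := fun (j : Fin d) => fun ω => (A d j ω - B d j ω) ^ 2) (s := Finset.univ)
      (fun j _ => (hfacts d j).1) (fun j _ k _ hjk => hind2 d j k hjk)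
    have heq : S d = ∑ j : Fin d, fun ω => (A d j ω - B d j ω) ^ 2 := by
      funext ω
      simp [hSdef, Finset.sum_apply]
    rw [heq, h]
  have hVb : ∀ d, variance (S d) μ ≤ 32 * C * d + (8 * (1 + 16 * C)) * T d := by
    intro d
    rw [hVarS d]
    calc (∑ j : Fin d, variance (fun ω => (A d j ω - B d j ω) ^ 2) μ)
        ≤ ∑ j : Fin d, (32 * C
            + (8 * (1 + 16 * C)) * ((∫ ω, A d j ω ∂μ) - ∫ ω, B d j ω ∂μ) ^ 2) :=
          Finset.sum_le_sum fun j _ => (hfacts d j).2.2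
      _ = 32 * C * d + (8 * (1 + 16 * C)) * T d := by
          rw [Finset.sum_add_distrib, Finset.sum_const, ← Finset.mul_sum, Finset.card_univ,
            Fintype.card_fin, nsmul_eq_mul]
          simp only [hTdef]
          ring
  have hvarlim : Tendsto (fun d : ℕ => variance (S d) μ / (d : ℝ) ^ 2) atTop (nhds 0) := by
    have hub : Tendsto (fun d : ℕ => 32 * C / (d : ℝ)
        + (8 * (1 + 16 * C)) * (T d / d) * (1 / d)) atTop (nhds 0) := by
      have h1 := tendsto_const_div_atTop_nhds_zero_nat (32 * C)
      have h2 : Tendsto (fun d : ℕ => (8 * (1 + 16 * C)) * (T d / d) * (1 / d)) atTop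
          (nhds ((8 * (1 + 16 * C)) * v * 0)) :=
        (hm.const_mul _).mul tendsto_one_div_atTop_nhds_zero_nat
      rw [mul_zero] at h2
      simpa using h1.add h2
    refine tendsto_of_tendsto_of_tendsto_of_le_of_le' tendsto_const_nhds hub
      (Eventually.of_forall fun d => div_nonneg (variance_nonneg _ _) (sq_nonneg _)) ?_
    filter_upwards [eventually_ge_atTop 1] with d hd
    have hdpos : (0 : ℝ) < d := by exact_mod_cast hd
    calc variance (S d) μ / (d : ℝ) ^ 2
        ≤ (32 * C * d + (8 * (1 + 16 * C)) * T d) / (d : ℝ) ^ 2 := by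
          exact div_le_div_of_nonneg_right (hVb d) (by positivity) |>.trans_eq rfl
      _ = 32 * C / (d : ℝ) + (8 * (1 + 16 * C)) * (T d / d) * (1 / d) := by
          field_simp
  have hmeanlim : Tendsto (fun d : ℕ => (∫ ω, S d ω ∂μ) / d) atTop (nhds (a + b + v)) := by
    have heq : (fun d : ℕ => (∫ ω, S d ω ∂μ) / d)
        = fun d : ℕ => (∑ j, variance (A d j) μ) / d + (∑ j, variance (B d j) μ) / d
            + T d / d := by
      funext d
      rw [hmeanS d, add_div, add_div]
    rw [heq]
    exact (hva.add hvb).add hm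
  have hTM := tendstoInMeasure_div_of_mean_var μ S (a + b + v) hS2 hmeanlim hvarlim
  have hTM2 := tendstoInMeasure_sqrt hTM
  have heq : (fun (d : ℕ) ω => Real.sqrt (∑ j, (A d j ω - B d j ω) ^ 2) / Real.sqrt d)
      = fun (d : ℕ) ω => Real.sqrt (S d ω / d) := by
    funext d ω
    rw [Real.sqrt_div (Finset.sum_nonneg fun j _ => sq_nonneg _)]
  rw [heq]
  exact hTM2

private lemma pair_indep {Ω : Type*} [MeasurableSpace Ω] {μ : Measure Ω} (d : ℕ)
    (F : Fin d × Fin 4 → Ω → ℝ)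
    (hindep : iIndepFun F μ)
    (hFmeas : ∀ p, Measurable (F p))
    (c1 c2 : Fin 4) (hc : c1 ≠ c2) (j k : Fin d) (hjk : j ≠ k) :
    IndepFun (fun ω => (F (j, c1) ω - F (j, c2) ω) ^ 2)
      (fun ω => (F (k, c1) ω - F (k, c2) ω) ^ 2) μ := by
  have h := hindep.indepFun_prodMk_prodMk hFmeas (j, c1) (j, c2) (k, c1) (k, c2)
    (by simp [hjk]) (by simp [hjk]) (by simp [hjk]) (by simp [hjk])
  have hg : Measurable (fun q : ℝ × ℝ => (q.1 - q.2) ^ 2) :=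
    (measurable_fst.sub measurable_snd).pow_const 2
  exact h.comp hg hg

theorem stmt_12 {Ω : Type*} [MeasurableSpace Ω] (μ : MeasureTheory.Measure Ω)
    [IsProbabilityMeasure μ]
    (X X' Y Y' : (d : ℕ) → Fin d → Ω → ℝ)
    (hmeas : ∀ d (j : Fin d), Measurable (X d j) ∧ Measurable (X' d j)
      ∧ Measurable (Y d j) ∧ Measurable (Y' d j))
    -- all coordinates of X, X', Y, Y' are jointly independent
    (hindep : ∀ d, iIndepFun
      (fun p : Fin d × Fin 4 => ![X d p.1, X' d p.1, Y d p.1, Y' d p.1] p.2) μ)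
    -- X' is a copy of X and Y' is a copy of Y
    (hid : ∀ d (j : Fin d),
      IdentDistrib (X d j) (X' d j) μ μ ∧ IdentDistrib (Y d j) (Y' d j) μ μ)
    (hint : ∀ d (j : Fin d), MeasureTheory.MemLp (X d j) 4 μ ∧ MeasureTheory.MemLp (Y d j) 4 μ)
    -- uniformly bounded fourth centered moments
    (hmom : ∃ C : ℝ, ∀ d (j : Fin d),
      (∫ ω, |X d j ω - ∫ ω', X d j ω' ∂μ| ^ 4 ∂μ) ≤ C ∧
      (∫ ω, |Y d j ω - ∫ ω', Y d j ω' ∂μ| ^ 4 ∂μ) ≤ C)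
    (σ1 σ2 υ : ℝ) (hσ1 : 0 ≤ σ1) (hσ2 : 0 ≤ σ2)
    -- E‖X − EX‖²/d → σ1², E‖Y − EY‖²/d → σ2², ‖EX − EY‖²/d → υ²
    (hv1 : Tendsto (fun d : ℕ => (∑ j, variance (X d j) μ) / d) atTop (nhds (σ1 ^ 2)))
    (hv2 : Tendsto (fun d : ℕ => (∑ j, variance (Y d j) μ) / d) atTop (nhds (σ2 ^ 2)))
    (hv3 : Tendsto (fun d : ℕ =>
      (∑ j, ((∫ ω, X d j ω ∂μ) - ∫ ω, Y d j ω ∂μ) ^ 2) / d) atTop (nhds (υ ^ 2))) :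
    TendstoInMeasure μ
        (fun d ω => Real.sqrt (∑ j, (X d j ω - X' d j ω) ^ 2) / Real.sqrt d) atTop
        (fun _ => Real.sqrt 2 * σ1)
    ∧ TendstoInMeasure μ
        (fun d ω => Real.sqrt (∑ j, (Y d j ω - Y' d j ω) ^ 2) / Real.sqrt d) atTop
        (fun _ => Real.sqrt 2 * σ2)
    ∧ TendstoInMeasure μ
        (fun d ω => Real.sqrt (∑ j, (X d j ω - Y d j ω) ^ 2) / Real.sqrt d) atTop
        (fun _ => Real.sqrt (σ1 ^ 2 + σ2 ^ 2 + υ ^ 2)) := by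
  obtain ⟨C, hC⟩ := hmom
  have hFmeas : ∀ d (p : Fin d × Fin 4),
      Measurable ((fun p : Fin d × Fin 4 =>
        ![X d p.1, X' d p.1, Y d p.1, Y' d p.1] p.2) p) := by
    rintro d ⟨j, i⟩
    fin_cases i
    · exact (hmeas d j).1
    · exact (hmeas d j).2.1
    · exact (hmeas d j).2.2.1
    · exact (hmeas d j).2.2.2
  have hX'4 : ∀ d (j : Fin d), MemLp (X' d j) 4 μ :=
    fun d j => ((hid d j).1).memLp_snd (hint d j).1
  have hY'4 : ∀ d (j : Fin d), MemLp (Y' d j) 4 μ :=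
    fun d j => ((hid d j).2).memLp_snd (hint d j).2
  have hintX : ∀ d (j : Fin d), (∫ ω, X d j ω ∂μ) = ∫ ω, X' d j ω ∂μ :=
    fun d j => ((hid d j).1).integral_eq
  have hintY : ∀ d (j : Fin d), (∫ ω, Y d j ω ∂μ) = ∫ ω, Y' d j ω ∂μ :=
    fun d j => ((hid d j).2).integral_eq
  have hCX : ∀ d (j : Fin d), (∫ ω, |X d j ω - ∫ ω', X d j ω' ∂μ| ^ 4 ∂μ) ≤ C :=
    fun d j => (hC d j).1
  have hCY : ∀ d (j : Fin d), (∫ ω, |Y d j ω - ∫ ω', Y d j ω' ∂μ| ^ 4 ∂μ) ≤ C :=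
    fun d j => (hC d j).2
  have hCX' : ∀ d (j : Fin d), (∫ ω, |X' d j ω - ∫ ω', X' d j ω' ∂μ| ^ 4 ∂μ) ≤ C := by
    intro d j
    have hu : Measurable (fun t : ℝ => |t - ∫ ω', X d j ω' ∂μ| ^ 4) :=
      ((measurable_id.sub_const _).abs.pow_const 4)
    have hcomp := (((hid d j).1).comp hu).integral_eq
    simp only [Function.comp] at hcomp
    rw [← hintX d j, ← hcomp]
    exact hCX d j
  have hCY' : ∀ d (j : Fin d), (∫ ω, |Y' d j ω - ∫ ω', Y' d j ω' ∂μ| ^ 4 ∂μ) ≤ C := by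
    intro d j
    have hu : Measurable (fun t : ℝ => |t - ∫ ω', Y d j ω' ∂μ| ^ 4) :=
      ((measurable_id.sub_const _).abs.pow_const 4)
    have hcomp := (((hid d j).2).comp hu).integral_eq
    simp only [Function.comp] at hcomp
    rw [← hintY d j, ← hcomp]
    exact hCY d j
  have hvX' : Tendsto (fun d : ℕ => (∑ j, variance (X' d j) μ) / d) atTop (nhds (σ1 ^ 2)) := by
    have heq : (fun d : ℕ => (∑ j, variance (X' d j) μ) / d)
        = fun d : ℕ => (∑ j, variance (X d j) μ) / d := by
      funext d
      rw [Finset.sum_congr rfl fun j _ => (((hid d j).1).variance_eq).symm]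
    rw [heq]; exact hv1
  have hvY' : Tendsto (fun d : ℕ => (∑ j, variance (Y' d j) μ) / d) atTop (nhds (σ2 ^ 2)) := by
    have heq : (fun d : ℕ => (∑ j, variance (Y' d j) μ) / d)
        = fun d : ℕ => (∑ j, variance (Y d j) μ) / d := by
      funext d
      rw [Finset.sum_congr rfl fun j _ => (((hid d j).2).variance_eq).symm]
    rw [heq]; exact hv2
  refine ⟨?_, ?_, ?_⟩
  · -- X vs X'
    have hind1 : ∀ d (j : Fin d), IndepFun (X d j) (X' d j) μ :=
      fun d j => (hindep d).indepFun
        (show ((j, 0) : Fin d × Fin 4) ≠ (j, 1) by simp)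
    have hind2 : ∀ d (j k : Fin d), j ≠ k →
        IndepFun (fun ω => (X d j ω - X' d j ω) ^ 2)
          (fun ω => (X d k ω - X' d k ω) ^ 2) μ :=
      fun d j k hjk => pair_indep d _ (hindep d) (hFmeas d) 0 1 (by decide) j k hjk
    have hm0 : Tendsto (fun d : ℕ =>
        (∑ j, ((∫ ω, X d j ω ∂μ) - ∫ ω, X' d j ω ∂μ) ^ 2) / d) atTop (nhds 0) := by
      have heq : (fun d : ℕ =>
          (∑ j, ((∫ ω, X d j ω ∂μ) - ∫ ω, X' d j ω ∂μ) ^ 2) / d) = fun _ : ℕ => (0 : ℝ) := by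
        funext d
        rw [Finset.sum_eq_zero fun j _ => by rw [hintX d j, sub_self]; ring]
        simp
      rw [heq]; exact tendsto_const_nhds
    have hres := master μ X X' (fun d j => (hint d j).1) hX'4 hind1 hind2 C hCX hCX'
      (σ1 ^ 2) (σ1 ^ 2) 0 hv1 hvX' hm0
    have hc : Real.sqrt 2 * σ1 = Real.sqrt (σ1 ^ 2 + σ1 ^ 2 + 0) := by
      rw [add_zero, ← two_mul, Real.sqrt_mul (by norm_num : (0:ℝ) ≤ 2), Real.sqrt_sq hσ1]
    rw [hc]; exact hres
  · -- Y vs Y'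
    have hind1 : ∀ d (j : Fin d), IndepFun (Y d j) (Y' d j) μ :=
      fun d j => (hindep d).indepFun
        (show ((j, 2) : Fin d × Fin 4) ≠ (j, 3) by simp)
    have hind2 : ∀ d (j k : Fin d), j ≠ k →
        IndepFun (fun ω => (Y d j ω - Y' d j ω) ^ 2)
          (fun ω => (Y d k ω - Y' d k ω) ^ 2) μ :=
      fun d j k hjk => pair_indep d _ (hindep d) (hFmeas d) 2 3 (by decide) j k hjk
    have hm0 : Tendsto (fun d : ℕ =>
        (∑ j, ((∫ ω, Y d j ω ∂μ) - ∫ ω, Y' d j ω ∂μ) ^ 2) / d) atTop (nhds 0) := by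
      have heq : (fun d : ℕ =>
          (∑ j, ((∫ ω, Y d j ω ∂μ) - ∫ ω, Y' d j ω ∂μ) ^ 2) / d) = fun _ : ℕ => (0 : ℝ) := by
        funext d
        rw [Finset.sum_eq_zero fun j _ => by rw [hintY d j, sub_self]; ring]
        simp
      rw [heq]; exact tendsto_const_nhds
    have hres := master μ Y Y' (fun d j => (hint d j).2) hY'4 hind1 hind2 C hCY hCY'
      (σ2 ^ 2) (σ2 ^ 2) 0 hv2 hvY' hm0
    have hc : Real.sqrt 2 * σ2 = Real.sqrt (σ2 ^ 2 + σ2 ^ 2 + 0) := by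
      rw [add_zero, ← two_mul, Real.sqrt_mul (by norm_num : (0:ℝ) ≤ 2), Real.sqrt_sq hσ2]
    rw [hc]; exact hres
  · -- X vs Y
    have hind1 : ∀ d (j : Fin d), IndepFun (X d j) (Y d j) μ :=
      fun d j => (hindep d).indepFun
        (show ((j, 0) : Fin d × Fin 4) ≠ (j, 2) by simp)
    have hind2 : ∀ d (j k : Fin d), j ≠ k →
        IndepFun (fun ω => (X d j ω - Y d j ω) ^ 2)
          (fun ω => (X d k ω - Y d k ω) ^ 2) μ :=
      fun d j k hjk => pair_indep d _ (hindep d) (hFmeas d) 0 2 (by decide) j k hjk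
    exact master μ X Y (fun d j => (hint d j).1) (fun d j => (hint d j).2) hind1 hind2
      C hCX hCY (σ1 ^ 2) (σ2 ^ 2) (υ ^ 2) hv1 hv2 hv3
end
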